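/- (Bonnet's theorem.) Let f : ℝ^d → ℝ be continuously differentiable and suppose there exist constants C, a > 0 such that |f(ξ)| + ‖∇f(ξ)‖ ≤ C exp(a‖ξ‖) for all ξ. Let Σ be a symmetric positive definite d×d matrix. Then the map μ ↦ ∫ f(ξ) N(ξ; μ, Σ) dξ is differentiable on ℝ^d and its gradient at every μ equals ∫ ∇f(ξ) N(ξ; μ, Σ) dξ. -/

import Mathlib

open MeasureTheory Real Matrix

/-- The Gaussian density on `ℝ^d` with mean `μ` and covariance matrix `Cov`. -/
noncomputable def gaussDensity (d : ℕ) (μ : Fin d → ℝ) (Cov : Matrix (Fin d) (Fin d) ℝ)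
    (ξ : Fin d → ℝ) : ℝ :=
  (2 * Real.pi) ^ (-(d : ℝ) / 2) * Cov.det ^ (-(1/2) : ℝ) *
    Real.exp (-(1/2) * ((ξ - μ) ⬝ᵥ (Cov⁻¹ *ᵥ (ξ - μ))))

lemma int1d (a : ℝ) {c : ℝ} (hc : 0 < c) :
    Integrable (fun x : ℝ => Real.exp (a * |x| - c * x ^ 2)) := by
  have hbd : ∀ x : ℝ, ‖Real.exp (a * |x| - c * x ^ 2)‖ ≤
      Real.exp (a ^ 2 / (2 * c)) * Real.exp (-(c / 2) * x ^ 2) := by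
    intro x
    rw [Real.norm_eq_abs, abs_of_pos (Real.exp_pos _), ← Real.exp_add]
    apply Real.exp_le_exp.2
    rw [← sub_nonneg]
    have h := sq_abs x
    set y := |x| with hy
    rw [← h]
    have hiden : a ^ 2 / (2 * c) + -(c / 2) * y ^ 2 - (a * y - c * y ^ 2)
        = (c * y - a) ^ 2 / (2 * c) := by
      field_simp
      ring
    rw [hiden]
    positivity
  refine Integrable.mono' ((integrable_exp_neg_mul_sq (by linarith : (0:ℝ) < c/2)).const_mul _)
    ?_ (Filter.Eventually.of_forall hbd)
  exact (Real.continuous_exp.comp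
    ((continuous_const.mul continuous_abs).sub
      (continuous_const.mul (continuous_pow 2)))).aestronglyMeasurable

lemma intNd (d : ℕ) {a : ℝ} (ha : 0 ≤ a) {b : ℝ} (hb : 0 < b) :
    Integrable (fun η : Fin d → ℝ => Real.exp (a * ‖η‖ - b * ‖η‖ ^ 2)) := by
  have hprod : Integrable (fun η : Fin d → ℝ =>
      ∏ i, Real.exp (a * |η i| - (b / d) * (η i) ^ 2)) := by
    apply Integrable.fintype_prod (f := fun (_ : Fin d) (x : ℝ) => Real.exp (a * |x| - (b/d) * x ^ 2))
    intro i
    exact int1d a (div_pos hb (by exact_mod_cast i.pos))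
  refine hprod.mono' ?_ (Filter.Eventually.of_forall ?_)
  · exact (Real.continuous_exp.comp
      ((continuous_const.mul continuous_norm).sub
        (continuous_const.mul (continuous_norm.pow 2)))).aestronglyMeasurable
  intro η
  rw [Real.norm_eq_abs, abs_of_pos (Real.exp_pos _), ← Real.exp_sum]
  apply Real.exp_le_exp.2
  have h1 : ‖η‖ ≤ ∑ i, |η i| := by
    refine (pi_norm_le_iff_of_nonneg (by positivity)).2 (fun i => ?_)
    rw [Real.norm_eq_abs]
    exact Finset.single_le_sum (f := fun j => |η j|) (fun j _ => abs_nonneg _)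
      (Finset.mem_univ i)
  have h2 : ∑ i, (b / d) * (η i) ^ 2 ≤ b * ‖η‖ ^ 2 := by
    rcases Nat.eq_zero_or_pos d with hd | hd
    · subst hd
      simp
      positivity
    · have hdpos : (0:ℝ) < d := by exact_mod_cast hd
      have hsq : ∀ i, (η i) ^ 2 ≤ ‖η‖ ^ 2 := fun i => by
        have h := norm_le_pi_norm η i
        rw [Real.norm_eq_abs] at h
        calc (η i) ^ 2 = |η i| ^ 2 := (sq_abs _).symm
        _ ≤ ‖η‖ ^ 2 := by gcongr
      calc ∑ i, (b / d) * (η i) ^ 2 ≤ ∑ _i : Fin d, (b / d) * ‖η‖ ^ 2 :=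
            Finset.sum_le_sum (fun i _ =>
              mul_le_mul_of_nonneg_left (hsq i) (div_pos hb hdpos).le)
        _ = d * ((b / d) * ‖η‖ ^ 2) := by
            rw [Finset.sum_const, Finset.card_univ, Fintype.card_fin, nsmul_eq_mul]
        _ = b * ‖η‖ ^ 2 := by field_simp
  rw [Finset.sum_sub_distrib]
  have h3 : a * ‖η‖ ≤ ∑ i, a * |η i| := by
    rw [← Finset.mul_sum]
    exact mul_le_mul_of_nonneg_left h1 ha
  linarith

lemma quad_lb (d : ℕ) (M : Matrix (Fin d) (Fin d) ℝ) (hM : M.PosDef) :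
    ∃ l > (0:ℝ), ∀ η : Fin d → ℝ, l * ‖η‖ ^ 2 ≤ η ⬝ᵥ (M *ᵥ η) := by
  rcases Nat.eq_zero_or_pos d with hd | hd
  · subst hd
    refine ⟨1, one_pos, fun η => ?_⟩
    have : η = 0 := Subsingleton.elim _ _
    rw [this, norm_zero]
    simp
  · haveI : Nonempty (Fin d) := ⟨⟨0, hd⟩⟩
    have hQc : Continuous (fun η : Fin d → ℝ => η ⬝ᵥ (M *ᵥ η)) :=
      continuous_id.dotProduct (continuous_const.matrix_mulVec continuous_id)
    have hne : (Metric.sphere (0 : Fin d → ℝ) 1).Nonempty :=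
      NormedSpace.sphere_nonempty.mpr zero_le_one
    obtain ⟨u, hu, hmin⟩ := (isCompact_sphere (0 : Fin d → ℝ) 1).exists_isMinOn hne
      hQc.continuousOn
    have hu1 : ‖u‖ = 1 := by simpa using hu
    have hu0 : u ≠ 0 := by intro h; rw [h] at hu1; simp at hu1
    have hl : 0 < u ⬝ᵥ (M *ᵥ u) := by
      have := hM.dotProduct_mulVec_pos hu0
      simpa using this
    refine ⟨u ⬝ᵥ (M *ᵥ u), hl, fun η => ?_⟩
    set l := u ⬝ᵥ (M *ᵥ u) with hldef
    rcases eq_or_ne η 0 with rfl | hη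
    · simp
    · have hr : 0 < ‖η‖ := norm_pos_iff.mpr hη
      set u' : Fin d → ℝ := ‖η‖⁻¹ • η with hu'
      have hu's : u' ∈ Metric.sphere (0 : Fin d → ℝ) 1 := by
        simp [hu', norm_smul, abs_of_pos (inv_pos.2 hr), inv_mul_cancel₀ hr.ne']
      have hηu : η = ‖η‖ • u' := by
        rw [hu', smul_inv_smul₀ hr.ne']
      have hscale : u' ⬝ᵥ (M *ᵥ u') = ‖η‖⁻¹ * (‖η‖⁻¹ * (η ⬝ᵥ (M *ᵥ η))) := by
        rw [hu', Matrix.mulVec_smul, smul_dotProduct, dotProduct_smul, smul_eq_mul,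
          smul_eq_mul]
      have hmin' := isMinOn_iff.mp hmin u' hu's
      calc l * ‖η‖ ^ 2 ≤ (u' ⬝ᵥ (M *ᵥ u')) * ‖η‖ ^ 2 :=
            mul_le_mul_of_nonneg_right hmin' (by positivity)
        _ = η ⬝ᵥ (M *ᵥ η) := by
            rw [hscale]
            have hne0 : ‖η‖ ≠ 0 := hr.ne'
            have harr : ‖η‖⁻¹ * (‖η‖⁻¹ * (η ⬝ᵥ (M *ᵥ η))) * ‖η‖ ^ 2
                = (‖η‖⁻¹ * ‖η‖) * ((‖η‖⁻¹ * ‖η‖) * (η ⬝ᵥ (M *ᵥ η))) := by ring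
            rw [harr, inv_mul_cancel₀ hne0, one_mul, one_mul]

/-- Bonnet's theorem: for `f` continuously differentiable with at most exponential
growth of `f` and `∇f`, the map `μ ↦ ∫ f(ξ) N(ξ; μ, Σ) dξ` is differentiable and
its gradient is `∫ ∇f(ξ) N(ξ; μ, Σ) dξ`. -/
theorem bonnet
    (d : ℕ) (f : (Fin d → ℝ) → ℝ) (hf : ContDiff ℝ 1 f)
    (hgrowth : ∃ C > (0:ℝ), ∃ a > (0:ℝ), ∀ ξ,
      |f ξ| + ‖fderiv ℝ f ξ‖ ≤ C * Real.exp (a * ‖ξ‖))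
    (Cov : Matrix (Fin d) (Fin d) ℝ) (hCov : Cov.PosDef) :
    ∀ μ : Fin d → ℝ, ∃ L : (Fin d → ℝ) →L[ℝ] ℝ,
      HasFDerivAt (fun μ' => ∫ ξ, f ξ * gaussDensity d μ' Cov ξ) L μ ∧
      ∀ v, L v = ∫ ξ, fderiv ℝ f ξ v * gaussDensity d μ Cov ξ := by
  obtain ⟨C, hC, a, ha, hgb⟩ := hgrowth
  intro μ
  set g : (Fin d → ℝ) → ℝ := gaussDensity d 0 Cov with hgdef
  -- basic facts about the density
  have hdet : 0 < Cov.det := hCov.det_pos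
  have hcpos : 0 < (2 * Real.pi) ^ (-(d : ℝ) / 2) * Cov.det ^ (-(1/2) : ℝ) := by
    have h2pi : (0:ℝ) < 2 * Real.pi := by positivity
    positivity
  have hgpos : ∀ η, 0 < g η := fun η => by
    rw [hgdef]
    unfold gaussDensity
    positivity
  have hQc : Continuous (fun η : Fin d → ℝ => (η - 0) ⬝ᵥ (Cov⁻¹ *ᵥ (η - 0))) :=
    (continuous_id.sub continuous_const).dotProduct
      (continuous_const.matrix_mulVec (continuous_id.sub continuous_const))
  have hgcont : Continuous g := by
    rw [hgdef]
    unfold gaussDensity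
    exact continuous_const.mul (Real.continuous_exp.comp (continuous_const.mul hQc))
  have hshift : ∀ (x ξ : Fin d → ℝ), gaussDensity d x Cov ξ = g (ξ - x) := by
    intro x ξ
    rw [hgdef]
    unfold gaussDensity
    rw [sub_zero]
  -- quadratic lower bound and integrability of gaussian-type majorants
  obtain ⟨l, hl, hlb⟩ := quad_lb d Cov⁻¹ hCov.inv
  have hgint : ∀ t : ℝ, 0 ≤ t → Integrable (fun η => g η * Real.exp (t * ‖η‖)) := by
    intro t ht
    have hmaj := (intNd d ht (half_pos hl)).const_mul
      ((2 * Real.pi) ^ (-(d : ℝ) / 2) * Cov.det ^ (-(1/2) : ℝ))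
    refine hmaj.mono' ((hgcont.mul (Real.continuous_exp.comp
      (continuous_const.mul continuous_norm))).aestronglyMeasurable)
      (Filter.Eventually.of_forall (fun η => ?_))
    have hq := hlb η
    rw [Real.norm_eq_abs, abs_of_pos (mul_pos (hgpos η) (Real.exp_pos _))]
    rw [hgdef]
    unfold gaussDensity
    rw [sub_zero, mul_assoc, ← Real.exp_add]
    apply mul_le_mul_of_nonneg_left _ hcpos.le
    apply Real.exp_le_exp.2
    linarith
  -- differentiability facts about f
  have hfd : Differentiable ℝ f := hf.differentiable one_ne_zero
  have hfc : Continuous f := hf.continuous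
  have hf'c : Continuous (fderiv ℝ f) := hf.continuous_fderiv one_ne_zero
  -- the derivative candidate
  set F' : (Fin d → ℝ) → (Fin d → ℝ) → (Fin d → ℝ) →L[ℝ] ℝ :=
    fun x η => g η • fderiv ℝ f (η + x) with hF'def
  set bound : (Fin d → ℝ) → ℝ :=
    fun η => (C * Real.exp (a * (‖μ‖ + 1))) * (g η * Real.exp (a * ‖η‖)) with hbdef
  have hbound_int : Integrable bound := (hgint a ha.le).const_mul _
  have hboundF : ∀ (x η : Fin d → ℝ), x ∈ Metric.ball μ 1 →
      ‖F' x η‖ ≤ bound η := by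
    intro x η hx
    have hxn : ‖x‖ ≤ ‖μ‖ + 1 := by
      have h1 : ‖x - μ‖ < 1 := by
        rw [← dist_eq_norm]; exact Metric.mem_ball.mp hx
      calc ‖x‖ = ‖x - μ + μ‖ := by rw [sub_add_cancel]
        _ ≤ ‖x - μ‖ + ‖μ‖ := norm_add_le _ _
        _ ≤ ‖μ‖ + 1 := by linarith
    have h1 : ‖fderiv ℝ f (η + x)‖ ≤ C * Real.exp (a * ‖η + x‖) :=
      le_trans (le_add_of_nonneg_left (abs_nonneg _)) (hgb _)
    have h2 : ‖η + x‖ ≤ ‖η‖ + (‖μ‖ + 1) := le_trans (norm_add_le _ _) (by linarith)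
    have h3 : ‖fderiv ℝ f (η + x)‖ ≤ C * Real.exp (a * (‖η‖ + (‖μ‖ + 1))) := by
      refine h1.trans (mul_le_mul_of_nonneg_left (Real.exp_le_exp.2 ?_) hC.le)
      exact mul_le_mul_of_nonneg_left h2 ha.le
    rw [hF'def]
    simp only []
    rw [norm_smul (g η) (fderiv ℝ f (η + x)), Real.norm_eq_abs, abs_of_pos (hgpos η)]
    calc g η * ‖fderiv ℝ f (η + x)‖
        ≤ g η * (C * Real.exp (a * (‖η‖ + (‖μ‖ + 1)))) :=
          mul_le_mul_of_nonneg_left h3 (hgpos η).le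
      _ = bound η := by
          rw [hbdef]
          simp only []
          rw [mul_add, Real.exp_add]
          ring
  -- main differentiation under the integral sign
  have key : HasFDerivAt (fun x => ∫ η, f (η + x) * g η) (∫ η, F' μ η) μ := by
    apply hasFDerivAt_integral_of_dominated_of_fderiv_le (s := Metric.ball μ 1) (Metric.ball_mem_nhds μ one_pos)
    · exact Filter.Eventually.of_forall (fun x =>
        ((hfc.comp (continuous_id.add continuous_const)).mul hgcont).aestronglyMeasurable)
    · -- integrability at μ
      refine hbound_int.mono'
        ((hfc.comp (continuous_id.add continuous_const)).mul hgcont).aestronglyMeasurable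
        (Filter.Eventually.of_forall (fun η => ?_))
      have h1 : |f (η + μ)| ≤ C * Real.exp (a * ‖η + μ‖) :=
        le_trans (le_add_of_nonneg_right (norm_nonneg _)) (hgb _)
      have h2 : ‖η + μ‖ ≤ ‖η‖ + (‖μ‖ + 1) := le_trans (norm_add_le _ _) (by linarith)
      have h3 : |f (η + μ)| ≤ C * Real.exp (a * (‖η‖ + (‖μ‖ + 1))) :=
        h1.trans (mul_le_mul_of_nonneg_left
          (Real.exp_le_exp.2 (mul_le_mul_of_nonneg_left h2 ha.le)) hC.le)
      rw [Real.norm_eq_abs, abs_mul, abs_of_pos (hgpos η)]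
      calc |f (η + μ)| * g η ≤ (C * Real.exp (a * (‖η‖ + (‖μ‖ + 1)))) * g η :=
            mul_le_mul_of_nonneg_right h3 (hgpos η).le
        _ = bound η := by
            rw [hbdef]
            simp only []
            rw [mul_add, Real.exp_add]
            ring
    · exact (hgcont.smul (hf'c.comp (continuous_id.add continuous_const))).aestronglyMeasurable
    · exact Filter.Eventually.of_forall (fun η x hx => hboundF x η hx)
    · exact hbound_int
    · refine Filter.Eventually.of_forall (fun η x hx => ?_)
      have h3 : HasFDerivAt (fun x : Fin d → ℝ => η + x) (ContinuousLinearMap.id ℝ _) x :=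
        (hasFDerivAt_id x).const_add η
      have h2 : HasFDerivAt (fun x => f (η + x)) (fderiv ℝ f (η + x)) x := by
        have h4 := (hfd (η + x)).hasFDerivAt.comp x h3
        rw [ContinuousLinearMap.comp_id] at h4
        exact h4
      exact h2.mul_const (g η)
  -- identify the function with the original one
  have hfun : (fun x => ∫ η, f (η + x) * g η)
      = (fun μ' => ∫ ξ, f ξ * gaussDensity d μ' Cov ξ) := by
    funext x
    have ht := MeasureTheory.integral_add_right_eq_self (μ := volume)
      (fun ξ => f ξ * g (ξ - x)) x
    simp only [add_sub_cancel_right] at ht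
    rw [ht]
    congr 1
    funext ξ
    rw [hshift]
  -- integrability of F' μ
  have hF'int : Integrable (F' μ) := by
    refine hbound_int.mono'
      ((hgcont.smul (hf'c.comp (continuous_id.add continuous_const))).aestronglyMeasurable)
      (Filter.Eventually.of_forall (fun η => hboundF μ η (Metric.mem_ball_self one_pos)))
  refine ⟨∫ η, F' μ η, ?_, ?_⟩
  · rw [← hfun]
    exact key
  · intro v
    rw [ContinuousLinearMap.integral_apply hF'int v]
    have ht := MeasureTheory.integral_add_right_eq_self (μ := volume)
      (fun ξ => fderiv ℝ f ξ v * g (ξ - μ)) μ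
    simp only [add_sub_cancel_right] at ht
    rw [show (fun η => (F' μ η) v) = (fun η => fderiv ℝ f (η + μ) v * g η) from
      funext (fun η => by rw [hF'def]; simp [mul_comm])]
    rw [ht]
    congr 1
    funext ξ
    rw [hshift, mul_comm]
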